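/- Let V be a real vector space and let I₁, I₂ be linear endomorphisms of V ⊕ V* with I₁² = -Id and I₂² = -Id, satisfying I₁I₂ + I₂I₁ = 2p·Id for a real number p with |p| < 1. Then K := (1/(2√(1-p²)))·(I₁I₂ - I₂I₁) satisfies K² = -Id and anti-commutes with both I₁ and I₂. -/
import Mathlib

theorem aux_stmt0 {A : Type*} [Ring A] [Algebra ℝ A] (a b : A)
    (h1 : a * a = -1) (h2 : b * b = -1) (p c : ℝ)
    (hac : a * b + b * a = (2 * p) • (1 : A))
    (hc : c * c * (4 * p ^ 2 - 4) = -1) :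
    (c • (a*b - b*a)) * (c • (a*b - b*a)) = -1
    ∧ (c • (a*b - b*a)) * a = -(a * (c • (a*b - b*a)))
    ∧ (c • (a*b - b*a)) * b = -(b * (c • (a*b - b*a))) := by
  have h1l : ∀ x : A, a * (a * x) = -x := by
    intro x; rw [← mul_assoc, h1]; simp
  have h2l : ∀ x : A, b * (b * x) = -x := by
    intro x; rw [← mul_assoc, h2]; simp
  have hba : b * a = (2*p) • (1:A) - a * b := by rw [← hac]; abel
  have hbal : ∀ x : A, b * (a * x) = (2*p) • x - a * (b * x) := by
    intro x
    rw [← mul_assoc, hba, sub_mul, smul_mul_assoc, one_mul, mul_assoc]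
  refine ⟨?_, ?_, ?_⟩
  · have e : (a*b - b*a) * (a*b - b*a) = (4*p^2 - 4) • (1:A) := by
      simp only [sub_mul, mul_sub, smul_sub, smul_smul, mul_assoc, h1l, h2l, hbal,
        smul_mul_assoc, mul_smul_comm, mul_one, one_mul, mul_neg, neg_neg, smul_neg,
        h1, h2, hba]
      module
    rw [smul_mul_smul_comm, e, smul_smul, hc]; simp
  · rw [smul_mul_assoc, mul_smul_comm, ← smul_neg]
    congr 1
    simp only [sub_mul, mul_sub, mul_assoc, h1l, h2l, hbal, h1, h2, mul_one, one_mul,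
      mul_neg, neg_neg, smul_sub, smul_smul, smul_neg]
    module
  · rw [smul_mul_assoc, mul_smul_comm, ← smul_neg]
    congr 1
    simp only [sub_mul, mul_sub, mul_assoc, h1l, h2l, hbal, h1, h2, mul_one, one_mul,
      mul_neg, neg_neg, smul_sub, smul_smul, smul_neg]
    module

/-- If `I₁, I₂` are complex structures on `V ⊕ V*` with
`I₁I₂ + I₂I₁ = 2p·Id`, `|p| < 1`, then `K = (1/(2√(1-p²)))(I₁I₂ - I₂I₁)`
squares to `-Id` and anti-commutes with `I₁` and `I₂`. -/
theorem stmt0 {V : Type*} [AddCommGroup V] [Module ℝ V] [FiniteDimensional ℝ V]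
    (I₁ I₂ : Module.End ℝ (V × Module.Dual ℝ V))
    (h1 : I₁ * I₁ = -1) (h2 : I₂ * I₂ = -1)
    (p : ℝ) (hp : |p| < 1)
    (hac : I₁ * I₂ + I₂ * I₁
      = (2 * p) • (1 : Module.End ℝ (V × Module.Dual ℝ V)))
    (K : Module.End ℝ (V × Module.Dual ℝ V))
    (hK : K = (1 / (2 * Real.sqrt (1 - p ^ 2))) • (I₁ * I₂ - I₂ * I₁)) :
    K * K = -1 ∧ K * I₁ = -(I₁ * K) ∧ K * I₂ = -(I₂ * K) := by
  have hp2 : (0:ℝ) < 1 - p ^ 2 := by nlinarith [sq_abs p, abs_nonneg p]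
  have hs : Real.sqrt (1 - p ^ 2) * Real.sqrt (1 - p ^ 2) = 1 - p ^ 2 :=
    Real.mul_self_sqrt hp2.le
  have hsne : Real.sqrt (1 - p ^ 2) ≠ 0 := by positivity
  have hc : (1 / (2 * Real.sqrt (1 - p ^ 2))) * (1 / (2 * Real.sqrt (1 - p ^ 2)))
      * (4 * p ^ 2 - 4) = -1 := by
    field_simp
    nlinarith [hs]
  subst hK
  exact aux_stmt0 I₁ I₂ h1 h2 p _ hac hc
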